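/- Let {alpha_j}_{j=0}^{N-1} be nonnegative functions on a finite data set {x_s}_{s=0}^{S-1}, and let A be the S x N collocation matrix A_{sj} = alpha_j(x_s). Suppose each column of A is nonzero and sum_j alpha_j(x_s) <= 1 for all s. Define the iteration C^{(q)} = C^{(q-1)} + D^{-1} A^T (X - A C^{(q-1)}), where D is the diagonal matrix with entries D_{jj} = sum_s A_{sj}. Then the eigenvalues of D^{-1} A^T A are real and lie in the interval [0, 1]. -/

import Mathlib

open Matrix

/-- for the LSPIA iteration matrix, with `A` nonnegative, having no
zero column and row sums at most 1, and `D = diag(colSums)`, every (complex)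
eigenvalue of `D⁻¹ Aᵀ A` is real and lies in `[0,1]`. -/
theorem lspia_eigenvalues_real_in_unit_interval (S N : ℕ)
    (A : Matrix (Fin S) (Fin N) ℝ)
    (hnonneg : ∀ s j, 0 ≤ A s j)
    (hcol : ∀ j, ∃ s, A s j ≠ 0)
    (hrow : ∀ s, (∑ j, A s j) ≤ 1)
    (D : Matrix (Fin N) (Fin N) ℝ)
    (hD : D = Matrix.diagonal (fun j => ∑ s, A s j)) :
    ∀ μ : ℂ,
      Module.End.HasEigenvalue
        (Matrix.toLin' ((D⁻¹ * Aᵀ * A).map (algebraMap ℝ ℂ))) μ →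
      μ.im = 0 ∧ 0 ≤ μ.re ∧ μ.re ≤ 1 := by
  subst hD
  intro μ hμ
  set d : Fin N → ℝ := fun j => ∑ s, A s j with hd
  have hdpos : ∀ j, 0 < d j := by
    intro j
    obtain ⟨s, hs⟩ := hcol j
    exact Finset.sum_pos' (fun i _ => hnonneg i j) ⟨s, Finset.mem_univ s,
      lt_of_le_of_ne (hnonneg s j) (Ne.symm hs)⟩
  have hdne : ∀ j, (d j : ℂ) ≠ 0 := fun j => by
    exact_mod_cast Complex.ofReal_ne_zero.mpr (hdpos j).ne'
  -- eigenvector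
  obtain ⟨v, hv⟩ := hμ.exists_hasEigenvector
  have hv0 : v ≠ 0 := hv.right
  have heq : (((Matrix.diagonal d)⁻¹ * Aᵀ * A).map (algebraMap ℝ ℂ)).mulVec v = μ • v := by
    simpa [Matrix.toLin'_apply] using hv.apply_eq_smul
  -- rewrite the diagonal inverse
  have hdiag : (Matrix.diagonal d)⁻¹ = Matrix.diagonal (fun j => (d j)⁻¹) := by
    refine Matrix.inv_eq_right_inv ?_
    rw [Matrix.diagonal_mul_diagonal]
    have : (fun j => d j * (d j)⁻¹) = fun _ => (1 : ℝ) :=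
      funext fun j => mul_inv_cancel₀ (hdpos j).ne'
    rw [this, Matrix.diagonal_one]
  -- the transformed vector u = A v (over ℂ)
  set u : Fin S → ℂ := fun s => ∑ j, (A s j : ℂ) * v j with hu
  -- entrywise eigen-equation: ∑ s, A s j * u s = μ * d j * v j
  have key : ∀ j, (∑ s, (A s j : ℂ) * u s) = μ * (d j : ℂ) * v j := by
    intro j
    have h1 := congrFun heq j
    rw [hdiag] at h1
    have h2 : (((Matrix.diagonal fun j => (d j)⁻¹) * Aᵀ * A).map (algebraMap ℝ ℂ)).mulVec v j
        = (d j : ℂ)⁻¹ * ∑ s, (A s j : ℂ) * u s := by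
      simp only [Matrix.mulVec, dotProduct, Matrix.map_apply, Matrix.mul_apply,
        Matrix.diagonal_apply, Matrix.transpose_apply, hu, Complex.coe_algebraMap,
        ite_mul, zero_mul, Finset.sum_ite_eq, Finset.mem_univ, if_true]
      push_cast
      simp only [Finset.sum_mul, Finset.mul_sum]
      rw [Finset.sum_comm]
      exact Finset.sum_congr rfl fun s _ => Finset.sum_congr rfl fun k _ => by ring
    rw [h2] at h1
    have h3 : (d j : ℂ) * ((d j : ℂ)⁻¹ * ∑ s, (A s j : ℂ) * u s) = (d j : ℂ) * (μ • v) j := by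
      rw [h1]
    rw [← mul_assoc, mul_inv_cancel₀ (hdne j), one_mul] at h3
    simp only [Pi.smul_apply, smul_eq_mul] at h3
    rw [h3]; ring
  -- sum against conjugate of v
  have hL : (∑ j, (starRingEnd ℂ) (v j) * ∑ s, (A s j : ℂ) * u s)
      = (↑(∑ s, Complex.normSq (u s)) : ℂ) := by
    simp only [Finset.mul_sum]
    rw [Finset.sum_comm]
    push_cast
    refine Finset.sum_congr rfl fun s _ => ?_
    have hconj : (starRingEnd ℂ) (u s) = ∑ j, (A s j : ℂ) * (starRingEnd ℂ) (v j) := by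
      rw [hu]
      simp [map_sum, Complex.conj_ofReal]
    calc ∑ j, (starRingEnd ℂ) (v j) * ((A s j : ℂ) * u s)
        = (∑ j, (A s j : ℂ) * (starRingEnd ℂ) (v j)) * u s := by
          rw [Finset.sum_mul]; exact Finset.sum_congr rfl fun j _ => by ring
      _ = (starRingEnd ℂ) (u s) * u s := by rw [hconj]
      _ = ↑(Complex.normSq (u s)) := by rw [mul_comm, Complex.mul_conj]
  have hR : (∑ j, (starRingEnd ℂ) (v j) * (μ * (d j : ℂ) * v j))
      = μ * (↑(∑ j, d j * Complex.normSq (v j)) : ℂ) := by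
    push_cast
    rw [Finset.mul_sum]
    refine Finset.sum_congr rfl fun j _ => ?_
    rw [show ((d j : ℂ)) * ↑(Complex.normSq (v j)) = (d j : ℂ) * ((v j) * (starRingEnd ℂ) (v j)) by
      rw [Complex.mul_conj]]
    ring
  have hmain : (↑(∑ s, Complex.normSq (u s)) : ℂ)
      = μ * (↑(∑ j, d j * Complex.normSq (v j)) : ℂ) := by
    rw [← hL, ← hR]
    exact Finset.sum_congr rfl fun j _ => by rw [key j]
  set L : ℝ := ∑ s, Complex.normSq (u s) with hLdef
  set T : ℝ := ∑ j, d j * Complex.normSq (v j) with hTdef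
  have hLnn : 0 ≤ L := Finset.sum_nonneg fun s _ => Complex.normSq_nonneg _
  have hTpos : 0 < T := by
    obtain ⟨j, hj⟩ := Function.ne_iff.mp hv0
    refine Finset.sum_pos' (fun k _ => mul_nonneg (hdpos k).le (Complex.normSq_nonneg _)) ?_
    exact ⟨j, Finset.mem_univ j, mul_pos (hdpos j) (Complex.normSq_pos.mpr hj)⟩
  -- μ = L / T as a real number
  have hμeq : μ = ((L / T : ℝ) : ℂ) := by
    have : μ = (L : ℂ) / (T : ℂ) := by
      rw [eq_div_iff (show (T : ℂ) ≠ 0 by exact_mod_cast hTpos.ne')]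
      exact hmain.symm
    rw [this]; push_cast; ring
  -- the bound L ≤ T
  have hLT : L ≤ T := by
    have hswap : T = ∑ s, ∑ j, A s j * Complex.normSq (v j) := by
      rw [hTdef]
      rw [show (∑ j, d j * Complex.normSq (v j))
          = ∑ j, ∑ s, A s j * Complex.normSq (v j) from
        Finset.sum_congr rfl fun j _ => by rw [hd]; exact Finset.sum_mul _ _ _]
      exact Finset.sum_comm
    rw [hswap]
    refine Finset.sum_le_sum fun s _ => ?_
    have hub : Complex.normSq (u s) ≤ (∑ j, A s j * ‖v j‖) ^ 2 := by
      rw [hu, Complex.normSq_eq_norm_sq]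
      have := norm_sum_le Finset.univ (fun j => (A s j : ℂ) * v j)
      simp only [norm_mul, Complex.norm_real, Real.norm_eq_abs,
        abs_of_nonneg (hnonneg s _)] at this
      exact pow_le_pow_left₀ (norm_nonneg _) this 2
    have hcs : (∑ j, A s j * ‖v j‖) ^ 2
        ≤ (∑ j, A s j) * ∑ j, A s j * Complex.normSq (v j) := by
      refine Finset.sum_sq_le_sum_mul_sum_of_sq_eq_mul Finset.univ
        (fun j _ => hnonneg s j)
        (fun j _ => mul_nonneg (hnonneg s j) (Complex.normSq_nonneg _)) ?_
      intro j _
      rw [Complex.normSq_eq_norm_sq]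
      ring
    have hone : (∑ j, A s j) * (∑ j, A s j * Complex.normSq (v j))
        ≤ ∑ j, A s j * Complex.normSq (v j) := by
      have hnn : 0 ≤ ∑ j, A s j * Complex.normSq (v j) :=
        Finset.sum_nonneg fun j _ => mul_nonneg (hnonneg s j) (Complex.normSq_nonneg _)
      nlinarith [hrow s]
    linarith
  refine ⟨?_, ?_, ?_⟩
  · rw [hμeq]; exact Complex.ofReal_im _
  · rw [hμeq, Complex.ofReal_re]; exact div_nonneg hLnn hTpos.le
  · rw [hμeq, Complex.ofReal_re]; exact (div_le_one hTpos).mpr hLT
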